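/- The space φ = ⊕_{n∈ℕ} ℝ of finitely supported real sequences, endowed with the finest locally convex topology (whose neighborhood base at 0 consists of the sets {f ∈ φ : |f(n)| < ε_n for all n}, for arbitrary positive sequences (ε_n)), is not κ-Fréchet–Urysohn: there is an open set U ⊆ φ with 0 ∈ cl(U) \ U such that no sequence in U converges to 0. -/

import Mathlib

open Filter Topology

/-- The box topology on `ℕ → ℝ`, generated by all boxes `∏ₙ oₙ` with each `oₙ` open. -/
def boxTopology : TopologicalSpace (ℕ → ℝ) :=
  TopologicalSpace.generateFrom
    {S | ∃ o : ℕ → Set ℝ, (∀ n, IsOpen (o n)) ∧ S = Set.pi Set.univ o}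

/-- The space `φ` of finitely supported real sequences, with the topology induced by the
box topology; its neighborhood base at `0` consists of the sets
`{f ∈ φ : |f n| < ε n for all n}` with `ε n > 0`. -/
def Phi : Type := {f : ℕ → ℝ // (Function.support f).Finite}

instance : TopologicalSpace Phi := boxTopology.induced Subtype.val

instance : Zero Phi := ⟨⟨0, by simp⟩⟩


/-- Any box-open set containing `x` contains a "small box" around `x`. -/
lemma box_open_sub {W : Set (ℕ → ℝ)} (hW : IsOpen[boxTopology] W) :
    ∀ x ∈ W, ∃ ε : ℕ → ℝ, (∀ n, 0 < ε n) ∧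
      {g : ℕ → ℝ | ∀ n, |g n - x n| < ε n} ⊆ W := by
  have hW' : TopologicalSpace.GenerateOpen
      {S | ∃ o : ℕ → Set ℝ, (∀ n, IsOpen (o n)) ∧ S = Set.pi Set.univ o} W := hW
  clear hW
  induction hW' with
  | basic S hS =>
    obtain ⟨o, ho, rfl⟩ := hS
    intro x hx
    have h : ∀ n, ∃ δ : ℝ, 0 < δ ∧ Metric.ball (x n) δ ⊆ o n := by
      intro n
      have := (Metric.isOpen_iff.1 (ho n)) (x n) (hx n (Set.mem_univ n))
      exact this
    choose ε hε hball using h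
    refine ⟨ε, hε, fun g hg n _ => hball n ?_⟩
    rw [Metric.mem_ball, Real.dist_eq]
    exact hg n
  | univ => exact fun x _ => ⟨fun _ => 1, fun _ => one_pos, fun g _ => trivial⟩
  | inter S T _ _ ihS ihT =>
    intro x hx
    obtain ⟨ε₁, hε₁, hsub₁⟩ := ihS x hx.1
    obtain ⟨ε₂, hε₂, hsub₂⟩ := ihT x hx.2
    refine ⟨fun n => min (ε₁ n) (ε₂ n), fun n => lt_min (hε₁ n) (hε₂ n), fun g hg => ?_⟩
    exact ⟨hsub₁ fun n => (hg n).trans_le (min_le_left _ _),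
      hsub₂ fun n => (hg n).trans_le (min_le_right _ _)⟩
  | sUnion 𝒮 _ ih =>
    intro x hx
    obtain ⟨s, hs, hxs⟩ := hx
    obtain ⟨ε, hε, hsub⟩ := ih s hs x hxs
    exact ⟨ε, hε, fun g hg => ⟨s, hs, hsub hg⟩⟩

/-- Boxes around `0` are open in the box topology. -/
lemma box_isOpen (ε : ℕ → ℝ) :
    IsOpen[boxTopology] {g : ℕ → ℝ | ∀ n, |g n| < ε n} := by
  apply TopologicalSpace.GenerateOpen.basic
  refine ⟨fun n => Metric.ball 0 (ε n), fun n => Metric.isOpen_ball, ?_⟩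
  ext g
  simp [Set.mem_pi, Real.dist_eq]

/-- `φ` is not κ-Fréchet–Urysohn: there is an open set `U` with `0 ∈ cl U \ U`
such that no sequence in `U` converges to `0`. -/
theorem stmt7 :
    ∃ U : Set Phi, IsOpen U ∧ (0 : Phi) ∈ closure U \ U ∧
      ∀ u : ℕ → Phi, (∀ n, u n ∈ U) → ¬ Tendsto u atTop (𝓝 (0 : Phi)) := by
  classical
  set V : Set (ℕ → ℝ) :=
    ⋃ n : ℕ, Set.pi Set.univ (fun m =>
      (if m = n then {x : ℝ | x ≠ 0} else Set.univ) ∩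
      (if m = 0 then Set.Ioi (1 / ((n : ℝ) + 1)) else Set.univ)) with hV
  have hVmem : ∀ g : ℕ → ℝ, g ∈ V ↔ ∃ n : ℕ, g n ≠ 0 ∧ 1 / ((n : ℝ) + 1) < g 0 := by
    intro g
    simp only [hV, Set.mem_iUnion, Set.mem_pi, Set.mem_univ, forall_true_left, Set.mem_inter_iff]
    constructor
    · rintro ⟨n, h⟩
      refine ⟨n, ?_, ?_⟩
      · have := (h n).1; simpa using this
      · have := (h 0).2; simpa using this
    · rintro ⟨n, h1, h2⟩
      refine ⟨n, fun m => ⟨?_, ?_⟩⟩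
      · by_cases hm : m = n
        · subst hm; rw [if_pos rfl]; exact h1
        · rw [if_neg hm]; trivial
      · by_cases hm : m = 0
        · subst hm; rw [if_pos rfl]; exact Set.mem_Ioi.2 h2
        · rw [if_neg hm]; trivial
  have hVopen : IsOpen[boxTopology] V := by
    rw [hV, ← Set.sUnion_range]
    apply TopologicalSpace.GenerateOpen.sUnion
    rintro S ⟨n, rfl⟩
    refine TopologicalSpace.GenerateOpen.basic _ ⟨_, fun m => ?_, rfl⟩
    apply IsOpen.inter
    · split <;> [exact isOpen_ne; exact isOpen_univ]
    · split <;> [exact isOpen_Ioi; exact isOpen_univ]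
  have hpre : ∀ W : Set (ℕ → ℝ), IsOpen[boxTopology] W → IsOpen (Subtype.val ⁻¹' W : Set Phi) := by
    intro W hW
    exact (@isOpen_induced_iff Phi (ℕ → ℝ) boxTopology (Subtype.val ⁻¹' W) Subtype.val).mpr ⟨W, hW, rfl⟩
  refine ⟨Subtype.val ⁻¹' V, hpre V hVopen, ⟨?_, ?_⟩, ?_⟩
  · -- 0 ∈ closure
    rw [mem_closure_iff]
    rintro o ho h0o
    rw [@isOpen_induced_iff Phi (ℕ → ℝ) boxTopology o Subtype.val] at ho
    obtain ⟨W, hW, rfl⟩ := ho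
    obtain ⟨ε, hε, hsub⟩ := box_open_sub hW _ h0o
    obtain ⟨N, hN⟩ := exists_nat_one_div_lt (hε 0)
    set n := N + 1 with hn
    set f : ℕ → ℝ := fun m => if m = 0 then 1 / ((N : ℝ) + 1)
      else if m = n then ε n / 2 else 0 with hf
    have hfin : (Function.support f).Finite := by
      apply Set.Finite.subset ((Set.finite_singleton n).insert 0)
      intro m hm
      simp only [Function.mem_support, hf] at hm
      by_cases h0 : m = 0
      · simp [h0]
      · by_cases h1 : m = n
        · simp [h1]
        · simp [h0, h1] at hm
    refine ⟨⟨f, hfin⟩, ?_, ?_⟩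
    · apply hsub
      intro m
      show |f m - (0 : ℕ → ℝ) m| < ε m
      simp only [Pi.zero_apply, sub_zero, hf]
      by_cases h0 : m = 0
      · subst h0
        rw [if_pos rfl, abs_of_pos (by positivity)]
        exact hN
      · rw [if_neg h0]
        by_cases h1 : m = n
        · subst h1
          rw [if_pos rfl, abs_of_pos (half_pos (hε n))]
          linarith [hε n]
        · rw [if_neg h1]
          simpa using hε m
    · show f ∈ V; rw [hVmem]
      refine ⟨n, ?_, ?_⟩
      · show f n ≠ 0
        have hne : n ≠ 0 := by omega
        simp only [hf, if_neg hne, if_pos rfl]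
        exact ne_of_gt (half_pos (hε n))
      · show 1 / ((n : ℝ) + 1) < f 0
        simp only [hf, if_pos rfl, hn]
        push_cast
        exact one_div_lt_one_div_of_lt (by positivity) (by linarith)
  · -- 0 ∉ U
    show (0 : ℕ → ℝ) ∉ V; rw [hVmem]
    rintro ⟨n, h1, h2⟩
    exact h1 rfl
  · -- no sequence from U converges to 0
    rintro u hu hT
    have hwit : ∀ k, ∃ n : ℕ, (u k).1 n ≠ 0 ∧ 1 / ((n : ℝ) + 1) < (u k).1 0 := by
      intro k
      have := hu k
      change (u k).1 ∈ V at this; rw [hVmem] at this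
      exact this
    choose n hn1 hn2 using hwit
    -- eventual membership in boxes
    have hbox : ∀ ε : ℕ → ℝ, (∀ m, 0 < ε m) →
        ∃ K, ∀ k ≥ K, ∀ m, |(u k).1 m| < ε m := by
      intro ε hεp
      have hopen : IsOpen (Subtype.val ⁻¹' {g : ℕ → ℝ | ∀ m, |g m| < ε m} : Set Phi) :=
        hpre _ (box_isOpen ε)
      have h0 : (0 : Phi) ∈ Subtype.val ⁻¹' {g : ℕ → ℝ | ∀ m, |g m| < ε m} := by
        intro m
        show |(0 : ℕ → ℝ) m| < ε m
        simpa using hεp m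
      have hev := hT (hopen.mem_nhds h0)
      rw [Filter.mem_map, Filter.mem_atTop_sets] at hev
      obtain ⟨K, hK⟩ := hev
      exact ⟨K, fun k hk m => hK k hk m⟩
    by_cases hfin : (Set.range n).Finite
    · -- range finite
      obtain ⟨M, hM⟩ := hfin.bddAbove
      have hMb : ∀ k, n k ≤ M := fun k => hM (Set.mem_range_self k)
      obtain ⟨K, hK⟩ := hbox (fun _ => 1 / ((M : ℝ) + 1)) (fun _ => by positivity)
      have h1 := hK K le_rfl 0
      have hcast : (n K : ℝ) ≤ M := Nat.cast_le.2 (hMb K)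
      have h2 : 1 / ((M : ℝ) + 1) ≤ 1 / ((n K : ℝ) + 1) :=
        one_div_le_one_div_of_le (by positivity) (by linarith)
      have h3 := hn2 K
      rw [abs_lt] at h1
      linarith [h1.2]
    · -- range infinite
      have hS : (Set.range n).Infinite := hfin
      have hex : ∀ m ∈ Set.range n, ∃ k, n k = m := fun m h => h
      choose! c hc using hex
      set ε : ℕ → ℝ := fun m => if m ∈ Set.range n then |(u (c m)).1 m| else 1 with hε
      have hεpos : ∀ m, 0 < ε m := by
        intro m
        by_cases h : m ∈ Set.range n
        · have h1 := hn1 (c m)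
          rw [hc m h] at h1
          simp only [hε]
          rw [if_pos h]
          exact abs_pos.mpr h1
        · simp only [hε]
          rw [if_neg h]
          exact one_pos
      obtain ⟨K, hK⟩ := hbox ε hεpos
      have hinj : Set.InjOn c (Set.range n) := by
        intro a ha b hb hab
        rw [← hc a ha, ← hc b hb, hab]
      have himg : (c '' Set.range n).Infinite := hS.image hinj
      obtain ⟨k, hk, hkK⟩ := himg.exists_gt K
      obtain ⟨m, hm, rfl⟩ := hk
      have hlt := hK (c m) hkK.le m
      simp only [hε] at hlt
      rw [if_pos hm] at hlt
      exact lt_irrefl _ hlt
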